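/- Let f₁ ∈ ker B* ⊆ 𝔨 and f₀ ∈ ker A* ⊆ 𝔨. Then (∏_{k=1}^n W_k)(A*f₁ ⊕ 0) = (∏_{k=1}^n e^{i(θ_k+φ_k)}) (A*f₁ ⊕ 0) and (∏_{k=1}^n W_k)(0 ⊕ B*f₀) = (∏_{k=1}^n e^{i(φ_k−θ_k)}) (0 ⊕ B*f₀). In particular, A*f₁ ⊕ 0 and 0 ⊕ B*f₀ are eigenvectors of ∏_{k=1}^n W_k with eigenvalues ∏ e^{i(θ_k+φ_k)} and ∏ e^{i(φ_k−θ_k)} respectively. -/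

import Mathlib

open ContinuousLinearMap Complex Submodule Polynomial in
theorem stmt15
    {H : Type*} [NormedAddCommGroup H] [InnerProductSpace ℂ H] [CompleteSpace H]
    (𝔥 𝔨 : Submodule ℂ H) [CompleteSpace 𝔥] [CompleteSpace 𝔨]
    (U : H →L[ℂ] H) (hU1 : adjoint U ∘L U = 1) (hU2 : U ∘L adjoint U = 1)
    (A : 𝔥 →L[ℂ] 𝔨) (B : 𝔥ᗮ →L[ℂ] 𝔨) (C : 𝔥 →L[ℂ] 𝔨ᗮ) (D : 𝔥ᗮ →L[ℂ] 𝔨ᗮ)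
    (hA : ∀ x : 𝔥, A x = orthogonalProjection 𝔨 (U x))
    (hB : ∀ y : 𝔥ᗮ, B y = orthogonalProjection 𝔨 (U y))
    (hC : ∀ x : 𝔥, C x = orthogonalProjection 𝔨ᗮ (U x))
    (hD : ∀ y : 𝔥ᗮ, D y = orthogonalProjection 𝔨ᗮ (U y))
    (θ φ : ℕ → ℝ) (W Wn : ℕ → (H →L[ℂ] H))
    (hWdef : ∀ k, W k = (Complex.exp (θ k * Complex.I) • (𝔥.subtypeL ∘L orthogonalProjection 𝔥) +
          Complex.exp (-θ k * Complex.I) • (1 - 𝔥.subtypeL ∘L orthogonalProjection 𝔥)) ∘L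
        (adjoint U ∘L
          ((Complex.exp (φ k * Complex.I) • (𝔨.subtypeL ∘L orthogonalProjection 𝔨) +
            Complex.exp (-φ k * Complex.I) • (1 - 𝔨.subtypeL ∘L orthogonalProjection 𝔨)) ∘L U)))
    (hWn0 : Wn 0 = 1) (hWnS : ∀ n, Wn (n + 1) = W (n + 1) ∘L Wn n)
    (n : ℕ) :
    (∀ f₁ : 𝔨, adjoint B f₁ = 0 →
      Wn n ((adjoint A f₁ : 𝔥) : H) =
        (∏ k ∈ Finset.Icc 1 n, Complex.exp ((θ k + φ k) * Complex.I)) • ((adjoint A f₁ : 𝔥) : H)) ∧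
    (∀ f₀ : 𝔨, adjoint A f₀ = 0 →
      Wn n ((adjoint B f₀ : 𝔥ᗮ) : H) =
        (∏ k ∈ Finset.Icc 1 n, Complex.exp ((φ k - θ k) * Complex.I)) • ((adjoint B f₀ : 𝔥ᗮ) : H)) := by
  -- Express A and B as compositions
  have hAc : A = (orthogonalProjection 𝔨 : H →L[ℂ] 𝔨) ∘L (U ∘L 𝔥.subtypeL) := by
    ext x; simp [hA]
  have hBc : B = (orthogonalProjection 𝔨 : H →L[ℂ] 𝔨) ∘L (U ∘L 𝔥ᗮ.subtypeL) := by
    ext x; simp [hB]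
  have hAadj : ∀ f : 𝔨,
      (adjoint A f : H) = (orthogonalProjection 𝔥 (adjoint U (f : H)) : H) := by
    intro f
    rw [hAc, adjoint_comp, adjoint_comp, Submodule.adjoint_orthogonalProjection,
      Submodule.adjoint_subtypeL]
    simp
  have hBadj : ∀ f : 𝔨,
      (adjoint B f : H) = (orthogonalProjection 𝔥ᗮ (adjoint U (f : H)) : H) := by
    intro f
    rw [hBc, adjoint_comp, adjoint_comp, Submodule.adjoint_orthogonalProjection,
      Submodule.adjoint_subtypeL]
    simp
  have hUU : ∀ v : H, U (adjoint U v) = v := fun v => congrFun (congrArg DFunLike.coe hU2) v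
  have hU'U : ∀ v : H, adjoint U (U v) = v := fun v => congrFun (congrArg DFunLike.coe hU1) v
  -- Key step lemma
  have key : ∀ (k : ℕ) (x : H) (f : 𝔨), U x = (f : H) →
      W k x = Complex.exp (φ k * Complex.I) •
        (Complex.exp (θ k * Complex.I) • ((orthogonalProjection 𝔥 x : H)) +
          Complex.exp (-θ k * Complex.I) • (x - (orthogonalProjection 𝔥 x : H))) := by
    intro k x f hUx
    have hux : adjoint U (f : H) = x := by rw [← hUx]; exact hU'U x
    rw [hWdef]
    simp only [comp_apply, add_apply, smul_apply, one_apply_eq_self, sub_apply, hUx,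
      Submodule.coe_subtypeL', Submodule.coe_subtype,
      orthogonalProjection_mem_subspace_eq_self]
    rw [sub_self, smul_zero, add_zero, map_smul, hux]
    simp only [add_apply, smul_apply, sub_apply, one_apply_eq_self, comp_apply, map_smul,
      Submodule.coe_subtypeL', Submodule.coe_subtype, SetLike.val_smul]
    module
  -- single-step eigenvector facts
  have key1 : ∀ (k : ℕ) (x : H) (f : 𝔨), x ∈ 𝔥 → U x = (f : H) →
      W k x = Complex.exp ((θ k + φ k) * Complex.I) • x := by
    intro k x f hx hUx
    rw [key k x f hUx, show (orthogonalProjection 𝔥 x : H) = x from starProjection_eq_self_iff.mpr hx]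
    rw [sub_self, smul_zero, add_zero, smul_smul, ← Complex.exp_add]
    congr 1
    push_cast; ring
  have key2 : ∀ (k : ℕ) (x : H) (f : 𝔨), x ∈ 𝔥ᗮ → U x = (f : H) →
      W k x = Complex.exp ((φ k - θ k) * Complex.I) • x := by
    intro k x f hx hUx
    rw [key k x f hUx,
      Submodule.orthogonalProjectionOnto_apply_of_mem_orthogonal hx]
    rw [Submodule.coe_zero, smul_zero, zero_add, sub_zero, smul_smul, ← Complex.exp_add]
    congr 1
    push_cast; ring
  -- iterate
  have iter : ∀ (c : ℕ → ℂ) (x : H), (∀ k, W k x = c k • x) →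
      ∀ m, Wn m x = (∏ k ∈ Finset.Icc 1 m, c k) • x := by
    intro c x hstep m
    induction m with
    | zero => simp [hWn0]
    | succ m ih =>
      rw [hWnS, comp_apply, ih, map_smul, hstep,
        Finset.prod_Icc_succ_top (Nat.succ_le_succ (Nat.zero_le m)), smul_smul, mul_comm]
  constructor
  · intro f₁ hf₁
    set x : H := ((adjoint A f₁ : 𝔥) : H) with hxdef
    have hx : x ∈ 𝔥 := (adjoint A f₁ : 𝔥).2
    have hUadj : adjoint U (f₁ : H) = x := by
      rw [← show (orthogonalProjection 𝔥 (adjoint U (f₁ : H)) : H) + (orthogonalProjection 𝔥ᗮ (adjoint U (f₁ : H)) : H) = adjoint U (f₁ : H) from starProjection_add_starProjection_orthogonal (K := 𝔥) (adjoint U (f₁ : H)),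
        ← hAadj f₁, ← hBadj f₁, hf₁]; simp [hxdef]
    have hUx : U x = (f₁ : H) := by rw [← hUadj, hUU]
    exact iter _ x (fun k => key1 k x f₁ hx hUx) n
  · intro f₀ hf₀
    set x : H := ((adjoint B f₀ : 𝔥ᗮ) : H) with hxdef
    have hx : x ∈ 𝔥ᗮ := (adjoint B f₀ : 𝔥ᗮ).2
    have hUadj : adjoint U (f₀ : H) = x := by
      rw [← show (orthogonalProjection 𝔥 (adjoint U (f₀ : H)) : H) + (orthogonalProjection 𝔥ᗮ (adjoint U (f₀ : H)) : H) = adjoint U (f₀ : H) from starProjection_add_starProjection_orthogonal (K := 𝔥) (adjoint U (f₀ : H)),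
        ← hAadj f₀, ← hBadj f₀, hf₀]; simp [hxdef]
    have hUx : U x = (f₀ : H) := by rw [← hUadj, hUU]
    exact iter _ x (fun k => key2 k x f₀ hx hUx) n
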